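/- For every Λ > 0 and every fixed σ ≥ 0, lim_{τ→∞} |∂_σ h(τ + σ, Λ)|/(1 - H(τ, Λ)) = e^{-σ/2}/4. -/

import Mathlib

open Real MeasureTheory Set Filter Topology

noncomputable def fph (σ x : ℝ) : ℝ :=
  x * Real.exp (-(x - σ)^2 / (2*σ)) / Real.sqrt (2*Real.pi*σ^3)

noncomputable def erfc (z : ℝ) : ℝ :=
  (2 / Real.sqrt Real.pi) * ∫ t in Set.Ioi z, Real.exp (-t^2)

noncomputable def fpH (σ x : ℝ) : ℝ :=
  (1/2) * (erfc ((x-σ)/Real.sqrt (2*σ)) + Real.exp (2*x) * erfc ((x+σ)/Real.sqrt (2*σ)))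

noncomputable def kap (σ y x : ℝ) : ℝ :=
  Real.exp (-(y - x + σ)^2/(2*σ)) / Real.sqrt (2*Real.pi*σ) * (1 - Real.exp (-(2*x*y)/σ))


noncomputable def Ig (z : ℝ) : ℝ := ∫ t in Set.Ioi z, Real.exp (-t^2)

lemma int_exp_sq : Integrable (fun t : ℝ => Real.exp (-t^2)) := by
  simpa using integrable_exp_neg_mul_sq (one_pos)

lemma Ig_neg (z : ℝ) : Ig (-z) = Real.sqrt π - Ig z := by
  have h1 := intervalIntegral.integral_Iic_add_Ioi (b := -z) (f := fun t : ℝ => Real.exp (-t^2))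
    int_exp_sq.integrableOn int_exp_sq.integrableOn
  have h2 : (∫ t in Iic (-z), Real.exp (-t^2)) = Ig z := by
    rw [← integral_comp_neg_Ioi z (fun t => Real.exp (-t^2))]
    simp [Ig, neg_sq]
  have h3 : (∫ t : ℝ, Real.exp (-t^2)) = Real.sqrt π := by
    simpa using integral_gaussian 1
  simp only [Ig] at *
  linarith

lemma intOn_exp_div (z : ℝ) (hz : 0 < z) (n : ℕ) :
    IntegrableOn (fun t => Real.exp (-t^2) / t^n) (Ioi z) := by
  refine Integrable.mono' (g := fun t => Real.exp (-t^2) / z^n)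
    (int_exp_sq.div_const _).integrableOn ?_ ?_
  · exact (Measurable.div (by measurability) (by measurability)).aestronglyMeasurable
  · filter_upwards [ae_restrict_mem measurableSet_Ioi] with t ht
    rw [Real.norm_eq_abs, abs_div, abs_of_pos (Real.exp_pos _), abs_of_pos (pow_pos (lt_trans hz ht) n)]
    apply div_le_div_of_nonneg_left (Real.exp_pos _).le (by positivity)
    exact pow_le_pow_left₀ hz.le (le_of_lt ht) n

lemma ftc_gen (k : ℕ) (z : ℝ) (hz : 0 < z) :
    ∫ t in Ioi z, (Real.exp (-t^2)/t^k + ((k+1:ℝ)/2) * (Real.exp (-t^2)/t^(k+2)))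
      = Real.exp (-z^2)/(2*z^(k+1)) := by
  have hderiv : ∀ x ∈ Ici z, HasDerivAt (fun t => -Real.exp (-t^2)/(2*t^(k+1)))
      (Real.exp (-x^2)/x^k + ((k+1:ℝ)/2) * (Real.exp (-x^2)/x^(k+2))) x := by
    intro x hx
    have hx0 : 0 < x := lt_of_lt_of_le hz hx
    have h1 : HasDerivAt (fun t : ℝ => -Real.exp (-t^2)) (-(Real.exp (-x^2) * (-2*x))) x := by
      have hin : HasDerivAt (fun t : ℝ => -t^2) (-(2*x)) x := by
        simpa using (hasDerivAt_pow 2 x).fun_neg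
      simpa [mul_comm] using hin.exp.fun_neg
    have h2 : HasDerivAt (fun t : ℝ => 2*t^(k+1)) (2*((k+1:ℝ)*x^k)) x := by
      simpa using (hasDerivAt_pow (k+1) x).const_mul (2:ℝ)
    have h3 := h1.fun_div h2 (by positivity)
    refine h3.congr_deriv ?_
    have hxk : x^k ≠ 0 := by positivity
    field_simp
    ring
  have hint : IntegrableOn
      (fun t => Real.exp (-t^2)/t^k + ((k+1:ℝ)/2) * (Real.exp (-t^2)/t^(k+2))) (Ioi z) := by
    exact (intOn_exp_div z hz k).add ((intOn_exp_div z hz (k+2)).const_mul _)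
  have htend : Tendsto (fun t => -Real.exp (-t^2)/(2*t^(k+1))) atTop (𝓝 0) := by
    have he : Tendsto (fun t : ℝ => Real.exp (-t^2)) atTop (𝓝 0) := by
      apply Real.tendsto_exp_atBot.comp
      exact tendsto_neg_atTop_atBot.comp (tendsto_pow_atTop two_ne_zero)
    have hp : Tendsto (fun t : ℝ => (2*t^(k+1))⁻¹) atTop (𝓝 0) := by
      apply Tendsto.inv_tendsto_atTop
      exact (tendsto_pow_atTop (Nat.succ_ne_zero k)).const_mul_atTop two_pos
    have := (he.mul hp).neg
    simpa [neg_div, div_eq_mul_inv] using this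
  have := integral_Ioi_of_hasDerivAt_of_tendsto' hderiv hint htend
  rw [this]
  have hzk : z^(k+1) ≠ 0 := by positivity
  field_simp
  ring

noncomputable def Kg (z : ℝ) : ℝ := ∫ t in Set.Ioi z, Real.exp (-t^2)/t^2
noncomputable def Lg (z : ℝ) : ℝ := ∫ t in Set.Ioi z, Real.exp (-t^2)/t^4

lemma Ig_add_K (z : ℝ) (hz : 0 < z) : Ig z + (1/2) * Kg z = Real.exp (-z^2)/(2*z) := by
  have h := ftc_gen 0 z hz
  rw [MeasureTheory.integral_add (intOn_exp_div z hz 0)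
    ((intOn_exp_div z hz 2).const_mul _), MeasureTheory.integral_const_mul _ _] at h
  simpa [Ig, Kg] using h

lemma K_add_L (z : ℝ) (hz : 0 < z) : Kg z + (3/2) * Lg z = Real.exp (-z^2)/(2*z^3) := by
  have h := ftc_gen 2 z hz
  rw [MeasureTheory.integral_add (intOn_exp_div z hz 2)
    ((intOn_exp_div z hz 4).const_mul _), MeasureTheory.integral_const_mul _ _] at h
  norm_num at h
  simpa [Kg, Lg] using h

lemma K_nonneg (z : ℝ) : 0 ≤ Kg z :=
  MeasureTheory.integral_nonneg fun t => by positivity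

lemma L_le (z : ℝ) (hz : 0 < z) : Lg z ≤ (1/z^2) * Kg z := by
  have : Lg z ≤ ∫ t in Ioi z, (1/z^2) * (Real.exp (-t^2)/t^2) := by
    apply MeasureTheory.setIntegral_mono_on (intOn_exp_div z hz 4)
      ((intOn_exp_div z hz 2).const_mul _) measurableSet_Ioi
    intro t ht
    have ht0 : 0 < t := lt_trans hz ht
    rw [div_le_iff₀ (by positivity)] at *
    have : z^2 * (Real.exp (-t^2) / t^2) * t^4 = (Real.exp (-t^2)) * (z^2 * t^2) := by
      field_simp
    calc Real.exp (-t^2) = Real.exp (-t^2) * 1 := by ring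
    _ ≤ 1/z^2 * (Real.exp (-t^2)/t^2) * t^4 := by
        rw [div_mul_eq_mul_div, div_mul_eq_mul_div, one_mul, le_div_iff₀ (by positivity)]
        have h2 : z^2 ≤ t^2 := by nlinarith [le_of_lt (mem_Ioi.mp ht)]
        calc Real.exp (-t^2) * 1 * z^2 ≤ Real.exp (-t^2) * t^2 := by nlinarith [Real.exp_pos (-t^2)]
        _ = Real.exp (-t^2) / t^2 * t^4 := by field_simp
  rwa [MeasureTheory.integral_const_mul _ _] at this

lemma K_le (z : ℝ) (hz : 0 < z) : Kg z ≤ Real.exp (-z^2)/(2*z^3) := by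
  have h1 := K_add_L z hz
  have h2 : 0 ≤ Lg z := MeasureTheory.integral_nonneg fun t => by positivity
  linarith

lemma K_ge (z : ℝ) (hz : 0 < z) :
    Real.exp (-z^2)/(2*z^3) - (3/4) * Real.exp (-z^2)/z^5 ≤ Kg z := by
  have h1 := K_add_L z hz
  have h2 := L_le z hz
  have h3 := K_le z hz
  have h4 : (1/z^2) * Kg z ≤ (1/z^2) * (Real.exp (-z^2)/(2*z^3)) := by
    apply mul_le_mul_of_nonneg_left h3 (by positivity)
  have h5 : (1/z^2) * (Real.exp (-z^2)/(2*z^3)) = Real.exp (-z^2)/(2*z^5) := by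
    field_simp
  have h6 : Real.exp (-z^2)/(2*z^5) = (1/2) * (Real.exp (-z^2)/z^5) := by
    field_simp
  have h7 : (3:ℝ)/4 * Real.exp (-z^2)/z^5 = (3/4) * (Real.exp (-z^2)/z^5) := by ring
  linarith

lemma Ig_ge (z : ℝ) (hz : 0 < z) :
    Real.exp (-z^2) * (1/(2*z) - 1/(4*z^3)) ≤ Ig z := by
  have h1 := Ig_add_K z hz
  have h3 := K_le z hz
  have : Real.exp (-z^2) * (1/(2*z) - 1/(4*z^3)) = Real.exp (-z^2)/(2*z) - (1/2) * (Real.exp (-z^2)/(2*z^3)) := by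
    field_simp; ring
  linarith

lemma Ig_le (z : ℝ) (hz : 0 < z) :
    Ig z ≤ Real.exp (-z^2) * (1/(2*z) - 1/(4*z^3) + 3/(8*z^5)) := by
  have h1 := Ig_add_K z hz
  have h3 := K_ge z hz
  have : Real.exp (-z^2) * (1/(2*z) - 1/(4*z^3) + 3/(8*z^5))
      = Real.exp (-z^2)/(2*z) - (1/2) * (Real.exp (-z^2)/(2*z^3) - (3/4) * Real.exp (-z^2)/z^5) := by
    field_simp; ring
  linarith


lemma fph_hasDeriv (Λ s : ℝ) (hs : 0 < s) :
    HasDerivAt (fun s => fph s Λ)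
      (fph s Λ * ((Λ^2 - s^2)/(2*s^2) - 3/(2*s))) s := by
  have hX : (0:ℝ) < 2*Real.pi*s^3 := by positivity
  have hsq : Real.sqrt (2*Real.pi*s^3) > 0 := Real.sqrt_pos.2 hX
  have hg : HasDerivAt (fun s : ℝ => -(Λ - s)^2 / (2*s)) ((Λ^2 - s^2)/(2*s^2)) s := by
    have h1 : HasDerivAt (fun s : ℝ => -(Λ - s)^2) (2*(Λ - s)) s := by
      have : HasDerivAt (fun s : ℝ => Λ - s) (-1) s := (hasDerivAt_id s).const_sub Λ
      simpa using (this.pow 2).fun_neg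
    have h2 : HasDerivAt (fun s : ℝ => 2*s) 2 s := by
      simpa using (hasDerivAt_id s).const_mul (2:ℝ)
    have := h1.fun_div h2 (by positivity)
    refine this.congr_deriv ?_
    field_simp
    ring
  have hexp := hg.exp
  have hq : HasDerivAt (fun s : ℝ => Real.sqrt (2*Real.pi*s^3))
      (1/(2*Real.sqrt (2*Real.pi*s^3)) * (2*Real.pi*(3*s^2))) s := by
    have hin : HasDerivAt (fun s : ℝ => 2*Real.pi*s^3) (2*Real.pi*(3*s^2)) s := by
      simpa using (hasDerivAt_pow 3 s).const_mul (2*Real.pi)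
    exact (Real.hasDerivAt_sqrt (ne_of_gt hX)).comp s hin
  have hinv := hq.fun_inv (ne_of_gt hsq)
  have hmain := ((hexp.const_mul Λ).fun_mul hinv)
  have heq : (fun s => fph s Λ)
      = fun s => (Λ * Real.exp (-(Λ - s)^2 / (2*s))) * (Real.sqrt (2*Real.pi*s^3))⁻¹ := by
    funext u
    simp [fph, div_eq_mul_inv]
  rw [heq]
  refine hmain.congr_deriv ?_
  have hss : Real.sqrt (2*Real.pi*s^3) ^ 2 = 2*Real.pi*s^3 := Real.sq_sqrt hX.le
  set q := Real.sqrt (2*Real.pi*s^3) with hqdef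
  have hq0 : q ≠ 0 := ne_of_gt hsq
  have key : -(1/(2*q) * (2*Real.pi*(3*s^2)))/q^2 = -(3/(2*s*q)) := by
    rw [hss]
    field_simp
  rw [key]
  have hfph : fph s Λ = Λ * Real.exp (-(Λ - s)^2 / (2*s)) * q⁻¹ := by
    simp only [fph, div_eq_mul_inv, ← hqdef]
  rw [hfph]
  have hs0 : s ≠ 0 := ne_of_gt hs
  field_simp
  ring

lemma num_tendsto (Λ σ : ℝ) (hΛ : 0 < Λ) (hσ : 0 ≤ σ) :
    Tendsto (fun τ => Real.sqrt (τ^3) * Real.exp (τ/2) * |deriv (fun s => fph s Λ) (τ + σ)|)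
      atTop (𝓝 (Λ * Real.exp (Λ - σ/2) / (2 * Real.sqrt (2*Real.pi)))) := by
  have hSat : Tendsto (fun τ : ℝ => τ + σ) atTop atTop := tendsto_atTop_add_const_right _ σ tendsto_id
  -- F1
  have hrat : Tendsto (fun τ : ℝ => τ/(τ+σ)) atTop (𝓝 1) := by
    have h0 : Tendsto (fun τ : ℝ => σ/(τ+σ)) atTop (𝓝 0) := tendsto_const_nhds.div_atTop hSat
    have h1 : Tendsto (fun τ : ℝ => 1 - σ/(τ+σ)) atTop (𝓝 1) := by
      simpa using (tendsto_const_nhds (x := (1:ℝ))).sub h0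
    apply h1.congr'
    filter_upwards [eventually_gt_atTop 0] with τ hτ
    have : τ + σ > 0 := by linarith
    field_simp
    ring
  have hF1 : Tendsto (fun τ : ℝ => Real.sqrt ((τ/(τ+σ))^3)) atTop (𝓝 1) := by
    have := (hrat.pow 3).sqrt
    simpa using this
  -- F2
  have hF2 : Tendsto (fun τ : ℝ => Real.exp (Λ - σ/2 - Λ^2/(2*(τ+σ)))) atTop (𝓝 (Real.exp (Λ - σ/2))) := by
    have h0 : Tendsto (fun τ : ℝ => Λ^2/(2*(τ+σ))) atTop (𝓝 0) :=
      tendsto_const_nhds.div_atTop (hSat.const_mul_atTop two_pos)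
    have h1 : Tendsto (fun τ : ℝ => Λ - σ/2 - Λ^2/(2*(τ+σ))) atTop (𝓝 (Λ - σ/2)) := by
      simpa using (tendsto_const_nhds (x := Λ - σ/2)).sub h0
    exact (Real.continuous_exp.tendsto _).comp h1
  -- F3
  have hF3 : Tendsto (fun τ : ℝ => |(Λ^2-(τ+σ)^2)/(2*(τ+σ)^2) - 3/(2*(τ+σ))|) atTop (𝓝 (1/2)) := by
    have h0 : Tendsto (fun τ : ℝ => Λ^2/(2*(τ+σ)^2)) atTop (𝓝 0) := by
      apply tendsto_const_nhds.div_atTop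
      exact ((tendsto_pow_atTop two_ne_zero).comp hSat).const_mul_atTop two_pos
    have h1 : Tendsto (fun τ : ℝ => 3/(2*(τ+σ))) atTop (𝓝 0) :=
      tendsto_const_nhds.div_atTop (hSat.const_mul_atTop two_pos)
    have h2 : Tendsto (fun τ : ℝ => Λ^2/(2*(τ+σ)^2) - 1/2 - 3/(2*(τ+σ))) atTop (𝓝 (-(1/2))) := by
      have := (h0.sub (tendsto_const_nhds (x := (1:ℝ)/2))).sub h1
      simpa using this
    have h3 := h2.abs
    rw [abs_neg, abs_of_pos (by norm_num : (0:ℝ) < 1/2)] at h3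
    apply h3.congr'
    filter_upwards [eventually_gt_atTop 0] with τ hτ
    have hS : τ + σ > 0 := by linarith
    congr 1
    field_simp
  -- combine
  have hprod : Tendsto (fun τ : ℝ =>
      (Λ / Real.sqrt (2*Real.pi)) * Real.sqrt ((τ/(τ+σ))^3)
        * Real.exp (Λ - σ/2 - Λ^2/(2*(τ+σ)))
        * |(Λ^2-(τ+σ)^2)/(2*(τ+σ)^2) - 3/(2*(τ+σ))|) atTop
      (𝓝 ((Λ / Real.sqrt (2*Real.pi)) * 1 * Real.exp (Λ - σ/2) * (1/2))) :=
    ((((tendsto_const_nhds (x := Λ / Real.sqrt (2*Real.pi))).mul hF1).mul hF2).mul hF3)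
  have hval : (Λ / Real.sqrt (2*Real.pi)) * 1 * Real.exp (Λ - σ/2) * (1/2)
      = Λ * Real.exp (Λ - σ/2) / (2 * Real.sqrt (2*Real.pi)) := by
    field_simp
  rw [hval] at hprod
  apply hprod.congr'
  filter_upwards [eventually_gt_atTop 0] with τ hτ
  have hS : 0 < τ + σ := by linarith
  have hderiv := (fph_hasDeriv Λ (τ+σ) hS).deriv
  rw [hderiv]
  have hfpos : 0 < fph (τ+σ) Λ := by
    simp only [fph]
    positivity
  rw [abs_mul, abs_of_pos hfpos]
  -- now unfold fph and reassemble
  have hsq3 : Real.sqrt (2*Real.pi*(τ+σ)^3) = Real.sqrt (2*Real.pi) * Real.sqrt ((τ+σ)^3) :=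
    Real.sqrt_mul (by positivity) _
  have hsqdiv : Real.sqrt ((τ/(τ+σ))^3) = Real.sqrt (τ^3) / Real.sqrt ((τ+σ)^3) := by
    rw [div_pow, Real.sqrt_div (by positivity)]
  have hexp : Real.exp (τ/2) * Real.exp (-(Λ - (τ+σ))^2 / (2*(τ+σ)))
      = Real.exp (Λ - σ/2 - Λ^2/(2*(τ+σ))) := by
    rw [← Real.exp_add]
    congr 1
    field_simp
    ring
  simp only [fph]
  rw [hsq3, hsqdiv]
  have h1 : 0 < Real.sqrt (2*Real.pi) := Real.sqrt_pos.2 (by positivity)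
  have h2 : 0 < Real.sqrt ((τ+σ)^3) := Real.sqrt_pos.2 (by positivity)
  rw [← hexp]
  field_simp

lemma Jg_ge (z : ℝ) (hz : 0 < z) : 1/(2*z) - 1/(4*z^3) ≤ Real.exp (z^2) * Ig z := by
  have h := mul_le_mul_of_nonneg_left (Ig_ge z hz) (Real.exp_pos (z^2)).le
  rwa [← mul_assoc, ← Real.exp_add, add_neg_cancel, Real.exp_zero, one_mul] at h

lemma Jg_le (z : ℝ) (hz : 0 < z) :
    Real.exp (z^2) * Ig z ≤ 1/(2*z) - 1/(4*z^3) + 3/(8*z^5) := by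
  have h := mul_le_mul_of_nonneg_left (Ig_le z hz) (Real.exp_pos (z^2)).le
  rwa [← mul_assoc, ← Real.exp_add, add_neg_cancel, Real.exp_zero, one_mul] at h

lemma delta_id (Λ τ u : ℝ) (hu0 : u ≠ 0) (hne1 : τ - Λ ≠ 0) (hne2 : τ + Λ ≠ 0)
    (hneΛ : τ^2 - Λ^2 ≠ 0) :
    1/(2*((τ-Λ)/u)) - 1/(2*((τ+Λ)/u)) = u*Λ/(τ^2-Λ^2) := by
  field_simp
  ring

lemma beta_id (Λ τ u : ℝ) (hu0 : u ≠ 0) (hne1 : τ - Λ ≠ 0) (hne2 : τ + Λ ≠ 0)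
    (hneΛ : τ^2 - Λ^2 ≠ 0) :
    1/(4*((τ-Λ)/u)^3) - 1/(4*((τ+Λ)/u)^3) = u^3*(6*τ^2*Λ+2*Λ^3)/(4*(τ^2-Λ^2)^3) := by
  field_simp
  ring

lemma gamma_id (w Λ τ u : ℝ) (hu0 : u ≠ 0) (hne1 : τ - Λ ≠ 0) :
    w * (3/(8*((τ-Λ)/u)^5)) = 3*(w*u^5)/(8*(τ-Λ)^5) := by
  field_simp

lemma small5 (z₁ z₂ : ℝ) (h1 : 0 < z₁) (h12 : z₁ ≤ z₂) : 3/(8*z₂^5) ≤ 3/(8*z₁^5) := by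
  have h : z₁^5 ≤ z₂^5 := pow_le_pow_left₀ h1.le h12 5
  have h2 : (0:ℝ) < z₁^5 := pow_pos h1 5
  rw [div_le_div_iff₀ (by linarith) (by linarith)]
  nlinarith

lemma small3 (z₁ z₂ : ℝ) (h1 : 0 < z₁) (h12 : z₁ ≤ z₂) :
    0 ≤ 1/(4*z₁^3) - 1/(4*z₂^3) := by
  have h : z₁^3 ≤ z₂^3 := pow_le_pow_left₀ h1.le h12 3
  have h2 : (0:ℝ) < z₁^3 := pow_pos h1 3
  have : 1/(4*z₂^3) ≤ 1/(4*z₁^3) := by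
    rw [div_le_div_iff₀ (by linarith) (by linarith)]
    nlinarith
  linarith

lemma beta_bound (Λ τ s : ℝ) (hΛ : 0 < Λ) (hτ : 2*Λ+1 ≤ τ) (hs1 : 1 ≤ s) (hs2 : s ≤ 3/2) :
    (2*s*τ^3)*(6*τ^2*Λ+2*Λ^3)/(4*(τ^2-Λ^2)^3) ≤ 96*Λ/τ := by
  have hτ0 : (0:ℝ) < τ := by linarith
  have hΛτ : Λ^2 ≤ τ^2/4 := by nlinarith
  have hpos : (0:ℝ) < τ^2 - Λ^2 := by nlinarith
  have hp : ((3:ℝ)/4*τ^2)^3 ≤ (τ^2-Λ^2)^3 :=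
    pow_le_pow_left₀ (by positivity) (by nlinarith) 3
  rw [div_le_div_iff₀ (by positivity) hτ0]
  have e1 : 2*s*τ^3*(6*τ^2*Λ+2*Λ^3)*τ ≤ 3*(τ^4*(6*τ^2*Λ+2*Λ^3)) := by
    have hm := mul_le_mul_of_nonneg_right (by linarith : 2*s ≤ 3)
      (by positivity : (0:ℝ) ≤ τ^4*(6*τ^2*Λ+2*Λ^3))
    nlinarith [hm]
  have e2 : 3*(τ^4*(6*τ^2*Λ+2*Λ^3)) ≤ 3*(τ^4*(13/2*τ^2*Λ)) := by
    have h2 : 2*Λ^3 ≤ 1/2*τ^2*Λ := by nlinarith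
    nlinarith [pow_pos hτ0 4]
  have e3 : 96*Λ*(4*((3:ℝ)/4*τ^2)^3) ≤ 96*Λ*(4*(τ^2-Λ^2)^3) := by
    have hm := mul_le_mul_of_nonneg_left hp (by positivity : (0:ℝ) ≤ 96*Λ*4)
    nlinarith [hm]
  nlinarith [e1, e2, e3, mul_pos hΛ (pow_pos hτ0 6)]

lemma gamma_bound (Λ τ s : ℝ) (hΛ : 0 < Λ) (hτ : 2*Λ+1 ≤ τ) (hs0 : 0 ≤ s) (hs2 : s ≤ 3/2) :
    3*(4*s*τ^4)/(8*(τ-Λ)^5) ≤ 72/τ := by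
  have hτ0 : (0:ℝ) < τ := by linarith
  have hτΛ : (0:ℝ) < τ - Λ := by linarith
  have hp : ((τ:ℝ)/2)^5 ≤ (τ-Λ)^5 := pow_le_pow_left₀ (by positivity) (by linarith) 5
  rw [div_le_div_iff₀ (by positivity) hτ0]
  nlinarith [hp, mul_le_mul_of_nonneg_right hs2 (le_of_lt (pow_pos hτ0 5))]

set_option maxHeartbeats 1000000 in
lemma core (Λ τ : ℝ) (hΛ : 0 < Λ) (hτ : 2*Λ + 1 ≤ τ) :
    |Real.sqrt (τ^3) * (Real.exp (((τ-Λ)/Real.sqrt (2*τ))^2) * Ig ((τ-Λ)/Real.sqrt (2*τ))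
      - Real.exp (((τ+Λ)/Real.sqrt (2*τ))^2) * Ig ((τ+Λ)/Real.sqrt (2*τ)))
      - Real.sqrt 2 * Λ * τ^2/(τ^2-Λ^2)| ≤ (96*Λ+72)/τ := by
  have hτ0 : (0:ℝ) < τ := by linarith
  have hτΛ : Λ < τ := by linarith
  have hs1 : (1:ℝ) ≤ Real.sqrt 2 := by
    rw [show (1:ℝ) = Real.sqrt 1 from (Real.sqrt_one).symm]
    exact Real.sqrt_le_sqrt (by norm_num)
  have hs2 : Real.sqrt 2 ≤ 3/2 := by
    rw [show (3:ℝ)/2 = Real.sqrt ((3/2)^2) from (Real.sqrt_sq (by norm_num)).symm]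
    exact Real.sqrt_le_sqrt (by norm_num)
  set s := Real.sqrt 2 with hsdef
  set u := Real.sqrt (2*τ) with hudef
  set v := Real.sqrt τ with hvdef
  set w := Real.sqrt (τ^3) with hwdef
  have hu2 : u^2 = 2*τ := Real.sq_sqrt (by linarith)
  have hv2 : v^2 = τ := Real.sq_sqrt hτ0.le
  have hu0 : (0:ℝ) < u := Real.sqrt_pos.2 (by linarith)
  have hv0 : (0:ℝ) < v := Real.sqrt_pos.2 hτ0
  have huv : u = s * v := Real.sqrt_mul (by norm_num) τ
  have hvu : v * u = s * τ := by rw [huv, ← hv2]; ring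
  have hst : w = τ * v := by
    rw [hwdef, show τ^3 = τ^2 * τ from by ring, Real.sqrt_mul (sq_nonneg τ),
      Real.sqrt_sq hτ0.le, hvdef]
  have hw0 : (0:ℝ) ≤ w := Real.sqrt_nonneg _
  clear_value s u v w
  have hne1 : τ - Λ ≠ 0 := by intro h; nlinarith
  have hne2 : τ + Λ ≠ 0 := by positivity
  have hposΛ : (0:ℝ) < τ^2 - Λ^2 := by nlinarith
  have hneΛ : τ^2 - Λ^2 ≠ 0 := ne_of_gt hposΛ
  set z₁ := (τ-Λ)/u with hz1def
  set z₂ := (τ+Λ)/u with hz2def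
  have hz₁ : 0 < z₁ := div_pos (by linarith) hu0
  have hz₂ : 0 < z₂ := div_pos (by linarith) hu0
  have h12 : z₁ ≤ z₂ := by
    rw [hz1def, hz2def]
    gcongr <;> linarith
  clear_value z₁ z₂
  have hJ1l := Jg_ge z₁ hz₁
  have hJ1u := Jg_le z₁ hz₁
  have hJ2l := Jg_ge z₂ hz₂
  have hJ2u := Jg_le z₂ hz₂
  have h5 : 3/(8*z₂^5) ≤ 3/(8*z₁^5) := small5 z₁ z₂ hz₁ h12
  have hβ0 : 0 ≤ 1/(4*z₁^3) - 1/(4*z₂^3) := small3 z₁ z₂ hz₁ h12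
  have hδ1 : 1/(2*z₁) - 1/(2*z₂) = u*Λ/(τ^2-Λ^2) := by
    rw [hz1def, hz2def]; exact delta_id Λ τ u hu0.ne' hne1 hne2 hneΛ
  have hδ : w * (1/(2*z₁) - 1/(2*z₂)) = s * Λ * τ^2/(τ^2-Λ^2) := by
    rw [hδ1, hst]
    calc τ * v * (u*Λ/(τ^2-Λ^2)) = (v*u)*(τ*Λ)/(τ^2-Λ^2) := by ring
    _ = s * τ * (τ*Λ)/(τ^2-Λ^2) := by rw [hvu]
    _ = s * Λ * τ^2/(τ^2-Λ^2) := by ring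
  have hβ1 : 1/(4*z₁^3) - 1/(4*z₂^3) = u^3*(6*τ^2*Λ+2*Λ^3)/(4*(τ^2-Λ^2)^3) := by
    rw [hz1def, hz2def]; exact beta_id Λ τ u hu0.ne' hne1 hne2 hneΛ
  have hsu3 : w * u^3 = 2*s*τ^3 := by
    rw [hst]
    calc τ*v*u^3 = (v*u)*(u^2*τ) := by ring
    _ = (s*τ)*((2*τ)*τ) := by rw [hvu, hu2]
    _ = 2*s*τ^3 := by ring
  have hβ : w * (1/(4*z₁^3) - 1/(4*z₂^3)) ≤ 96*Λ/τ := by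
    rw [hβ1]
    have heq : w * (u^3*(6*τ^2*Λ+2*Λ^3)/(4*(τ^2-Λ^2)^3))
        = (2*s*τ^3)*(6*τ^2*Λ+2*Λ^3)/(4*(τ^2-Λ^2)^3) := by
      rw [← hsu3]; ring
    rw [heq]
    exact beta_bound Λ τ s hΛ hτ hs1 hs2
  have hγ : w * (3/(8*z₁^5)) ≤ 72/τ := by
    have hsu5 : w * u^5 = 4*s*τ^4 := by
      rw [hst]
      calc τ*v*u^5 = (v*u)*((u^2)^2*τ) := by ring
      _ = (s*τ)*((2*τ)^2*τ) := by rw [hvu, hu2]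
      _ = 4*s*τ^4 := by ring
    have heq : w * (3/(8*z₁^5)) = 3*(w*u^5)/(8*(τ-Λ)^5) := by
      rw [hz1def]; exact gamma_id w Λ τ u hu0.ne' hne1
    rw [heq, hsu5]
    exact gamma_bound Λ τ s hΛ hτ (by linarith) hs2
  have hCs : (96*Λ+72)/τ = 96*Λ/τ + 72/τ := by ring
  have hβnn : 0 ≤ w * (1/(4*z₁^3) - 1/(4*z₂^3)) := mul_nonneg hw0 hβ0
  rw [abs_le]
  constructor
  · have key : (1/(2*z₁) - 1/(2*z₂)) - ((1/(4*z₁^3) - 1/(4*z₂^3)) + 3/(8*z₁^5))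
        ≤ Real.exp (z₁^2) * Ig z₁ - Real.exp (z₂^2) * Ig z₂ := by
      linarith
    have hm := mul_le_mul_of_nonneg_left key hw0
    have expand : w * ((1/(2*z₁) - 1/(2*z₂)) - ((1/(4*z₁^3) - 1/(4*z₂^3)) + 3/(8*z₁^5)))
        = w*(1/(2*z₁) - 1/(2*z₂)) - w*(1/(4*z₁^3) - 1/(4*z₂^3)) - w*(3/(8*z₁^5)) := by ring
    rw [expand, hδ] at hm
    linarith
  · have key : Real.exp (z₁^2) * Ig z₁ - Real.exp (z₂^2) * Ig z₂
        ≤ (1/(2*z₁) - 1/(2*z₂)) - (1/(4*z₁^3) - 1/(4*z₂^3)) + 3/(8*z₁^5) := by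
      linarith
    have hm := mul_le_mul_of_nonneg_left key hw0
    have expand : w * ((1/(2*z₁) - 1/(2*z₂)) - (1/(4*z₁^3) - 1/(4*z₂^3)) + 3/(8*z₁^5))
        = w*(1/(2*z₁) - 1/(2*z₂)) - w*(1/(4*z₁^3) - 1/(4*z₂^3)) + w*(3/(8*z₁^5)) := by ring
    rw [expand, hδ] at hm
    have hτpos : 0 < 72/τ := by positivity
    linarith

lemma erfc_eq (x : ℝ) : erfc x = 2/Real.sqrt π * Ig x := rfl

lemma den_tendsto (Λ : ℝ) (hΛ : 0 < Λ) :
    Tendsto (fun τ => Real.sqrt (τ^3) * Real.exp (τ/2) * (1 - fpH τ Λ)) atTop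
      (𝓝 (Real.sqrt 2 * Λ * Real.exp Λ / Real.sqrt π)) := by
  have hπ : (0:ℝ) < Real.sqrt π := Real.sqrt_pos.2 Real.pi_pos
  -- limit of the main rational term
  have hsub : Tendsto (fun τ : ℝ => τ^2 - Λ^2) atTop atTop := by
    have := tendsto_atTop_add_const_right atTop (-Λ^2) (tendsto_pow_atTop two_ne_zero)
    simpa [sub_eq_add_neg] using this
  have ha : Tendsto (fun τ : ℝ => Real.sqrt 2*Λ*τ^2/(τ^2-Λ^2)) atTop
      (𝓝 (Real.sqrt 2*Λ)) := by
    have h1 : Tendsto (fun τ:ℝ => Λ^2/(τ^2-Λ^2)) atTop (𝓝 0) :=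
      tendsto_const_nhds.div_atTop hsub
    have h2 : Tendsto (fun τ:ℝ => Real.sqrt 2*Λ + Real.sqrt 2*Λ*(Λ^2/(τ^2-Λ^2))) atTop
        (𝓝 (Real.sqrt 2*Λ)) := by
      have := ((tendsto_const_nhds (x := Real.sqrt 2*Λ)).mul h1)
      simpa using (tendsto_const_nhds (x := Real.sqrt 2*Λ)).add this
    apply h2.congr'
    filter_upwards [eventually_gt_atTop Λ, eventually_gt_atTop 0] with τ h h0
    have hne : τ^2 - Λ^2 ≠ 0 := by nlinarith
    field_simp
    ring
  have hC : Tendsto (fun τ : ℝ => (96*Λ+72)/τ) atTop (𝓝 0) :=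
    tendsto_const_nhds.div_atTop tendsto_id
  -- squeeze for Φ
  have hΦ : Tendsto (fun τ : ℝ => Real.sqrt (τ^3) *
      (Real.exp (((τ-Λ)/Real.sqrt (2*τ))^2) * Ig ((τ-Λ)/Real.sqrt (2*τ))
        - Real.exp (((τ+Λ)/Real.sqrt (2*τ))^2) * Ig ((τ+Λ)/Real.sqrt (2*τ)))) atTop
      (𝓝 (Real.sqrt 2*Λ)) := by
    apply tendsto_of_tendsto_of_tendsto_of_le_of_le' (g := fun τ : ℝ =>
        Real.sqrt 2*Λ*τ^2/(τ^2-Λ^2) - (96*Λ+72)/τ)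
      (h := fun τ : ℝ => Real.sqrt 2*Λ*τ^2/(τ^2-Λ^2) + (96*Λ+72)/τ)
    · simpa using ha.sub hC
    · simpa using ha.add hC
    · filter_upwards [eventually_ge_atTop (2*Λ+1)] with τ hτ
      have := abs_le.1 (core Λ τ hΛ hτ)
      linarith [this.1]
    · filter_upwards [eventually_ge_atTop (2*Λ+1)] with τ hτ
      have := abs_le.1 (core Λ τ hΛ hτ)
      linarith [this.2]
  -- exponential factor
  have hE : Tendsto (fun τ : ℝ => Real.exp (Λ - Λ^2/(2*τ))) atTop (𝓝 (Real.exp Λ)) := by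
    have h0 : Tendsto (fun τ:ℝ => Λ^2/(2*τ)) atTop (𝓝 0) :=
      tendsto_const_nhds.div_atTop (tendsto_id.const_mul_atTop two_pos)
    have h1 : Tendsto (fun τ:ℝ => Λ - Λ^2/(2*τ)) atTop (𝓝 Λ) := by
      simpa using (tendsto_const_nhds (x := Λ)).sub h0
    exact (Real.continuous_exp.tendsto _).comp h1
  have hprod := (hE.const_mul (1/Real.sqrt π)).mul hΦ
  have hval : 1/Real.sqrt π * Real.exp Λ * (Real.sqrt 2*Λ)
      = Real.sqrt 2 * Λ * Real.exp Λ / Real.sqrt π := by ring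
  rw [hval] at hprod
  apply hprod.congr'
  filter_upwards [eventually_ge_atTop (2*Λ+1)] with τ hτ
  have hτ0 : (0:ℝ) < τ := by linarith
  have hτΛ : Λ < τ := by linarith
  -- step (a)
  have ha1 : 1 - fpH τ Λ = (1/Real.sqrt π) *
      (Ig ((τ-Λ)/Real.sqrt (2*τ)) - Real.exp (2*Λ) * Ig ((τ+Λ)/Real.sqrt (2*τ))) := by
    simp only [fpH]
    rw [show (Λ-τ)/Real.sqrt (2*τ) = -((τ-Λ)/Real.sqrt (2*τ)) by ring,
      show (Λ+τ)/Real.sqrt (2*τ) = (τ+Λ)/Real.sqrt (2*τ) by ring]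
    rw [erfc_eq, erfc_eq, Ig_neg]
    field_simp
    ring
  -- step (b)
  have hz1sq : ((τ-Λ)/Real.sqrt (2*τ))^2 = (τ-Λ)^2/(2*τ) := by
    rw [div_pow, Real.sq_sqrt (by linarith)]
  have hz2sq : ((τ+Λ)/Real.sqrt (2*τ))^2 = (τ+Λ)^2/(2*τ) := by
    rw [div_pow, Real.sq_sqrt (by linarith)]
  have e1 : Real.exp (τ/2) = Real.exp (Λ - Λ^2/(2*τ)) * Real.exp (((τ-Λ)/Real.sqrt (2*τ))^2) := by
    rw [← Real.exp_add]
    congr 1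
    rw [hz1sq]
    field_simp
    ring
  have e2 : Real.exp (τ/2) * Real.exp (2*Λ)
      = Real.exp (Λ - Λ^2/(2*τ)) * Real.exp (((τ+Λ)/Real.sqrt (2*τ))^2) := by
    rw [← Real.exp_add, ← Real.exp_add]
    congr 1
    rw [hz2sq]
    field_simp
    ring
  symm
  rw [ha1]
  calc Real.sqrt (τ^3) * Real.exp (τ/2) * ((1/Real.sqrt π) *
      (Ig ((τ-Λ)/Real.sqrt (2*τ)) - Real.exp (2*Λ) * Ig ((τ+Λ)/Real.sqrt (2*τ))))
      = (1/Real.sqrt π) * Real.sqrt (τ^3) *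
        (Real.exp (τ/2) * Ig ((τ-Λ)/Real.sqrt (2*τ))
          - (Real.exp (τ/2) * Real.exp (2*Λ)) * Ig ((τ+Λ)/Real.sqrt (2*τ))) := by ring
    _ = (1/Real.sqrt π) * Real.sqrt (τ^3) *
        ((Real.exp (Λ - Λ^2/(2*τ)) * Real.exp (((τ-Λ)/Real.sqrt (2*τ))^2)) * Ig ((τ-Λ)/Real.sqrt (2*τ))
          - (Real.exp (Λ - Λ^2/(2*τ)) * Real.exp (((τ+Λ)/Real.sqrt (2*τ))^2)) * Ig ((τ+Λ)/Real.sqrt (2*τ))) := by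
        rw [← e1, ← e2]
    _ = 1/Real.sqrt π * Real.exp (Λ - Λ^2/(2*τ)) * (Real.sqrt (τ^3) *
        (Real.exp (((τ-Λ)/Real.sqrt (2*τ))^2) * Ig ((τ-Λ)/Real.sqrt (2*τ))
          - Real.exp (((τ+Λ)/Real.sqrt (2*τ))^2) * Ig ((τ+Λ)/Real.sqrt (2*τ)))) := by ring

theorem shifted_deriv_hazard_limit (Λ σ : ℝ) (hΛ : 0 < Λ) (hσ : 0 ≤ σ) :
    Filter.Tendsto (fun τ => |deriv (fun s => fph s Λ) (τ + σ)| / (1 - fpH τ Λ))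
      Filter.atTop (nhds (Real.exp (-σ/2) / 4)) := by
  have hN := num_tendsto Λ σ hΛ hσ
  have hD := den_tendsto Λ hΛ
  have hc0 : Real.sqrt 2 * Λ * Real.exp Λ / Real.sqrt π ≠ 0 := by positivity
  have hdiv := hN.div hD hc0
  have hval : (Λ * Real.exp (Λ - σ/2) / (2 * Real.sqrt (2*Real.pi)))
      / (Real.sqrt 2 * Λ * Real.exp Λ / Real.sqrt π) = Real.exp (-σ/2) / 4 := by
    have h2 : Real.sqrt 2 * Real.sqrt 2 = 2 := Real.mul_self_sqrt (by norm_num)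
    have hs0 : Real.sqrt 2 ≠ 0 := by positivity
    have hp0 : Real.sqrt π ≠ 0 := by positivity
    have hb0 : Real.exp Λ ≠ 0 := (Real.exp_pos Λ).ne'
    have hΛ0 : Λ ≠ 0 := hΛ.ne'
    rw [Real.sqrt_mul (by norm_num : (0:ℝ) ≤ 2) Real.pi]
    rw [show Λ - σ/2 = -σ/2 + Λ by ring, Real.exp_add]
    field_simp
    linear_combination (-2) * h2
  rw [hval] at hdiv
  apply hdiv.congr'
  filter_upwards [eventually_gt_atTop 0] with τ hτ
  have hw : Real.sqrt (τ^3) * Real.exp (τ/2) ≠ 0 := by positivity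
  exact mul_div_mul_left _ _ hw
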